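/- Let G be a finitely generated subgroup of ℝ^n and set Γ = G ∩ ℤ^n (a lattice, not necessarily full rank). Then for any finite subset F ⊂ G and any ε > 0, the dual Γ* is contained in F^{*,ε} + ℤ^n. -/

import Mathlib

def intPoints (n : ℕ) : Set (EuclideanSpace ℝ (Fin n)) :=
  {x | ∀ i, ∃ k : ℤ, x i = (k : ℝ)}

def dualSet {n : ℕ} (S : Set (EuclideanSpace ℝ (Fin n))) : Set (EuclideanSpace ℝ (Fin n)) :=
  {x | ∀ g ∈ S, ∃ k : ℤ, (inner ℝ x g : ℝ) = (k : ℝ)}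

def approxDual {n : ℕ} (S : Set (EuclideanSpace ℝ (Fin n))) (ε : ℝ) :
    Set (EuclideanSpace ℝ (Fin n)) :=
  {x | ∀ g ∈ S, ∃ k : ℤ, |(inner ℝ x g : ℝ) - (k : ℝ)| ≤ ε}

open Submodule Module RealInnerProductSpace

section Bidual
variable {E : Type*} [NormedAddCommGroup E] [InnerProductSpace ℝ E] [FiniteDimensional ℝ E]

theorem bidual_mem_closure (S : AddSubgroup E) (t : E)
    (ht : ∀ a : E, (∀ s ∈ S, ∃ k : ℤ, ⟪a, s⟫ = (k : ℝ)) → ∃ k : ℤ, ⟪a, t⟫ = (k : ℝ)) :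
    t ∈ closure (S : Set E) := by
  set W : AddSubgroup E := S.topologicalClosure with hWdef
  have hWclosed : IsClosed (W : Set E) := S.isClosed_topologicalClosure
  set V : Submodule ℝ E :=
    { carrier := {v | ∀ r : ℝ, r • v ∈ W}
      add_mem' := fun hv hw r => by
        simpa [smul_add] using W.add_mem (hv r) (hw r)
      zero_mem' := fun r => by simpa using W.zero_mem
      smul_mem' := fun c v hv r => by simpa [smul_smul] using hv (r * c) } with hVdef
  have hVmem : ∀ v : E, v ∈ V ↔ ∀ r : ℝ, r • v ∈ W := fun v => Iff.rfl
  have hVW : ∀ v ∈ V, v ∈ W := fun v hv => by simpa using (hVmem v).1 hv 1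
  set L : Submodule ℤ E := AddSubgroup.toIntSubmodule (W ⊓ Vᗮ.toAddSubgroup) with hLdef
  have hLmem : ∀ x : E, x ∈ L ↔ x ∈ W ∧ x ∈ Vᗮ := fun x => Iff.rfl
  -- decomposition of W
  have hdecomp : ∀ w ∈ W, ∃ v ∈ V, ∃ l ∈ L, w = v + l := by
    intro w hw
    refine ⟨orthogonalProjection V w, coe_mem _, w - orthogonalProjection V w, ?_, by abel⟩
    exact (hLmem _).2 ⟨W.sub_mem hw (hVW _ (coe_mem _)),
      by exact sub_starProjection_mem_orthogonal (K := V) w⟩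
  -- discreteness of L
  have hsep : ∃ ε : ℝ, 0 < ε ∧ ∀ x ∈ L, ‖x‖ < ε → x = 0 := by
    by_contra hcon
    push_neg at hcon
    have hseq : ∀ j : ℕ, ∃ x : E, x ∈ L ∧ ‖x‖ < 1 / (j + 1) ∧ x ≠ 0 := by
      intro j
      obtain ⟨x, hxL, hxn, hx0⟩ := hcon (1 / (j + 1)) (by positivity)
      exact ⟨x, hxL, hxn, hx0⟩
    choose u huL hun hu0 using hseq
    set d : ℕ → E := fun j => ‖u j‖⁻¹ • u j with hddef
    have hdsph : ∀ j, d j ∈ Metric.sphere (0 : E) 1 := by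
      intro j
      simp only [mem_sphere_zero_iff_norm, hddef, norm_smul, norm_inv, norm_norm]
      rw [inv_mul_cancel₀ (norm_ne_zero_iff.2 (hu0 j))]
    obtain ⟨z, hzsph, φ, hφ, hlim⟩ :=
      (isCompact_sphere (0 : E) 1).tendsto_subseq hdsph
    have hnorm_to_zero : Filter.Tendsto (fun j => ‖u (φ j)‖) Filter.atTop (nhds 0) := by
      refine squeeze_zero (g := fun j : ℕ => 1 / ((j : ℝ) + 1)) (fun j => norm_nonneg _)
        (fun j => (hun (φ j)).le.trans ?_) tendsto_one_div_add_atTop_nhds_zero_nat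
      exact one_div_le_one_div_of_le (by positivity)
        (by exact_mod_cast Nat.succ_le_succ (hφ.id_le j))
    have hzV : z ∈ V := by
      intro r
      have hterm : ∀ j : ℕ, (⌊r / ‖u (φ j)‖⌋ : ℤ) • u (φ j) ∈ W := fun j =>
        AddSubgroup.zsmul_mem W ((hLmem _).1 (huL (φ j))).1 _
      have heq : ∀ j : ℕ, (⌊r / ‖u (φ j)‖⌋ : ℤ) • u (φ j)
          = ((⌊r / ‖u (φ j)‖⌋ : ℝ) * ‖u (φ j)‖) • d (φ j) := by
        intro j
        rw [hddef]
        rw [smul_smul, mul_assoc, mul_inv_cancel₀ (norm_ne_zero_iff.2 (hu0 (φ j))), mul_one,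
          Int.cast_smul_eq_zsmul]
      have hcoef : Filter.Tendsto (fun j => (⌊r / ‖u (φ j)‖⌋ : ℝ) * ‖u (φ j)‖)
          Filter.atTop (nhds r) := by
        rw [tendsto_iff_dist_tendsto_zero]
        refine squeeze_zero (fun j => dist_nonneg) (fun j => ?_) hnorm_to_zero
        have hc : (0:ℝ) < ‖u (φ j)‖ := norm_pos_iff.2 (hu0 _)
        set y := r / ‖u (φ j)‖ with hy
        have heq2 : (⌊y⌋ : ℝ) * ‖u (φ j)‖ - r = ((⌊y⌋ : ℝ) - y) * ‖u (φ j)‖ := by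
          rw [hy]; field_simp
        have h1 : |(⌊y⌋ : ℝ) - y| ≤ 1 := by
          rw [abs_le]
          constructor
          · nlinarith [Int.sub_one_lt_floor y]
          · nlinarith [Int.floor_le y]
        rw [Real.dist_eq, heq2, abs_mul, abs_of_pos hc]
        nlinarith
      have : Filter.Tendsto (fun j => (⌊r / ‖u (φ j)‖⌋ : ℤ) • u (φ j)) Filter.atTop
          (nhds (r • z)) := by
        simp_rw [heq]
        exact hcoef.smul hlim
      exact hWclosed.mem_of_tendsto this (Filter.Eventually.of_forall hterm)
    have hzVperp : z ∈ Vᗮ := by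
      have hmem : ∀ j, (d ∘ φ) j ∈ Vᗮ :=
        fun j => Submodule.smul_mem _ _ (((hLmem _).1 (huL (φ j))).2)
      exact V.isClosed_orthogonal.mem_of_tendsto hlim (Filter.Eventually.of_forall hmem)
    have hz0 : z = 0 := by
      rw [← inner_self_eq_zero (𝕜 := ℝ)]
      exact (Submodule.mem_orthogonal V z).1 hzVperp z hzV
    rw [hz0] at hzsph
    simp at hzsph
  obtain ⟨ε, hε0, hsepε⟩ := hsep
  have hLdisc : DiscreteTopology L := by
    refine discreteTopology_iff_isOpen_singleton_zero.mpr ⟨Metric.ball 0 ε, Metric.isOpen_ball, ?_⟩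
    ext x
    simp only [Set.mem_preimage, mem_ball_zero_iff, Set.mem_singleton_iff]
    constructor
    · intro h
      exact Subtype.ext (hsepε x.1 x.2 h)
    · rintro rfl
      simpa using hε0
  -- the lattice inside its real span
  set f := (span ℝ (L : Set E)).subtype with hfdef
  set L₀ := L.comap (f.restrictScalars ℤ) with hL₀def
  have h_img : f '' L₀ = L := by
    rw [← LinearMap.coe_restrictScalars ℤ f, ← Submodule.map_coe (f.restrictScalars ℤ),
      Submodule.map_comap_eq_self]
    exact fun x hx ↦ LinearMap.mem_range.mpr ⟨⟨x, Submodule.subset_span hx⟩, rfl⟩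
  have hL₀disc : DiscreteTopology L₀ := by
    refine DiscreteTopology.preimage_of_continuous_injective (L : Set E) ?_ (injective_subtype _)
    exact LinearMap.continuous_of_finiteDimensional f
  have hL₀lat : IsZLattice ℝ L₀ := ⟨by
    rw [← (Submodule.map_injective_of_injective (injective_subtype _)).eq_iff, Submodule.map_span,
      Submodule.map_top, range_subtype, h_img]⟩
  have hfin : Module.Finite ℤ L₀ := ZLattice.module_finite ℝ L₀
  have hfree : Module.Free ℤ L₀ := ZLattice.module_free ℝ L₀
  set b := Module.Free.chooseBasis ℤ L₀ with hbdef
  set B := b.ofZLatticeBasis ℝ L₀ with hBdef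
  have hspan_perp : span ℝ (L : Set E) ≤ Vᗮ :=
    span_le.mpr (fun x hx => ((hLmem x).1 hx).2)
  -- dual vectors
  set a : Module.Free.ChooseBasisIndex ℤ L₀ → span ℝ (L : Set E) := fun i =>
    (InnerProductSpace.toDual ℝ (span ℝ (L : Set E))).symm
      (LinearMap.toContinuousLinearMap (B.coord i)) with hadef
  have ha : ∀ i (x : span ℝ (L : Set E)), ⟪(a i : E), (x : E)⟫ = B.repr x i := by
    intro i x
    rw [← Submodule.coe_inner, hadef]
    rw [InnerProductSpace.toDual_symm_apply]
    simp [Basis.coord_apply]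
  have haS : ∀ i, ∀ s ∈ S, ∃ k : ℤ, ⟪(a i : E), s⟫ = (k : ℝ) := by
    intro i s hs
    obtain ⟨v, hv, l, hl, rfl⟩ := hdecomp s (S.le_topologicalClosure hs)
    have h1 : ⟪(a i : E), v⟫ = 0 :=
      Submodule.inner_left_of_mem_orthogonal hv (hspan_perp (a i).2)
    have hl' : (⟨l, subset_span hl⟩ : span ℝ (L : Set E)) ∈ L₀ := by
      rw [hL₀def, Submodule.mem_comap]
      exact hl
    have hl'' : (⟨l, subset_span hl⟩ : span ℝ (L : Set E)) ∈ span ℤ (Set.range B) := by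
      rw [hBdef, b.ofZLatticeBasis_span ℝ]
      exact hl'
    obtain ⟨k, hk⟩ := (B.mem_span_iff_repr_mem ℤ _).1 hl'' i
    refine ⟨k, ?_⟩
    rw [inner_add_right, h1, zero_add, ha i ⟨l, subset_span hl⟩, ← hk]
    simp
  -- Step A : t ∈ V ⊔ span ℝ L
  set U : Submodule ℝ E := V ⊔ span ℝ (L : Set E) with hUdef
  have hWU : ∀ w ∈ W, w ∈ U := by
    intro w hw
    obtain ⟨v, hv, l, hl, rfl⟩ := hdecomp w hw
    exact U.add_mem (Submodule.mem_sup_left hv) (Submodule.mem_sup_right (subset_span hl))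
  have htU : t ∈ U := by
    by_contra htUn
    set t' : E := t - (orthogonalProjection U t : E) with ht'def
    have ht'perp : t' ∈ Uᗮ := by exact sub_starProjection_mem_orthogonal (K := U) t
    have ht'0 : t' ≠ 0 := by
      intro h0
      apply htUn
      have : t = (orthogonalProjection U t : E) := by
        rw [← sub_eq_zero]; exact h0
      rw [this]; exact coe_mem _
    have hip : (0:ℝ) < ⟪t', t'⟫ := by
      rcases (real_inner_self_nonneg (x := t')).lt_or_eq with h | h
      · exact h
      · exact absurd (inner_self_eq_zero.1 h.symm) ht'0
    have hside : ∀ s ∈ S, ∃ k : ℤ, ⟪(1 / (2 * ⟪t', t'⟫)) • t', s⟫ = (k : ℝ) := by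
      intro s hs
      refine ⟨0, ?_⟩
      have hsU : s ∈ U := hWU s (S.le_topologicalClosure hs)
      rw [Int.cast_zero]
      exact Submodule.inner_left_of_mem_orthogonal hsU (Submodule.smul_mem _ _ ht'perp)
    obtain ⟨k, hk⟩ := ht ((1 / (2 * ⟪t', t'⟫)) • t') hside
    have h2 : ⟪t', t⟫ = ⟪t', t'⟫ := by
      have h3 : ⟪t', (orthogonalProjection U t : E)⟫ = 0 :=
        Submodule.inner_left_of_mem_orthogonal (coe_mem _) ht'perp
      have h4 : t = (orthogonalProjection U t : E) + t' := by rw [ht'def]; abel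
      rw [h4, inner_add_right, h3, zero_add]
    rw [real_inner_smul_left, h2] at hk
    have h5 : (k : ℝ) = 1 / 2 := by
      rw [← hk]
      have : (2 * ⟪t', t'⟫) ≠ 0 := by positivity
      field_simp
    have h6 : ((2 * k : ℤ) : ℝ) = 1 := by push_cast; linarith
    have h7 : (2 * k : ℤ) = 1 := by exact_mod_cast h6
    omega
  -- Step B : conclude
  obtain ⟨v, hv, uu, huu, hteq⟩ := Submodule.mem_sup.1 htU
  have hrep : ∀ i, ∃ k : ℤ, B.repr (⟨uu, huu⟩ : span ℝ (L : Set E)) i = (k : ℝ) := by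
    intro i
    obtain ⟨k, hk⟩ := ht (a i) (haS i)
    refine ⟨k, ?_⟩
    rw [← ha i ⟨uu, huu⟩, ← hk, ← hteq, inner_add_right,
      Submodule.inner_left_of_mem_orthogonal hv (hspan_perp (a i).2), zero_add]
  have huuL₀ : (⟨uu, huu⟩ : span ℝ (L : Set E)) ∈ L₀ := by
    rw [← b.ofZLatticeBasis_span ℝ, ← hBdef, Basis.mem_span_iff_repr_mem]
    intro i
    obtain ⟨k, hk⟩ := hrep i
    exact ⟨k, by simpa using hk.symm⟩
  have huuL : uu ∈ L := huuL₀
  have : t ∈ W := by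
    rw [← hteq] at *
    exact W.add_mem (hVW v hv) ((hLmem uu).1 huuL).1
  exact this
end Bidual

lemma intPoints_zero (n : ℕ) : (0 : EuclideanSpace ℝ (Fin n)) ∈ intPoints n :=
  fun i => ⟨0, by simp⟩

lemma intPoints_add {n : ℕ} {x y : EuclideanSpace ℝ (Fin n)}
    (hx : x ∈ intPoints n) (hy : y ∈ intPoints n) : x + y ∈ intPoints n := by
  intro i
  obtain ⟨a, ha⟩ := hx i
  obtain ⟨b, hb⟩ := hy i
  exact ⟨a + b, by simp [ha, hb]⟩

lemma intPoints_neg {n : ℕ} {x : EuclideanSpace ℝ (Fin n)}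
    (hx : x ∈ intPoints n) : -x ∈ intPoints n := by
  intro i
  obtain ⟨a, ha⟩ := hx i
  exact ⟨-a, by simp [ha]⟩

lemma intPoints_single {n : ℕ} (j : Fin n) :
    EuclideanSpace.single j (1 : ℝ) ∈ intPoints n := by
  intro i
  refine ⟨if i = j then 1 else 0, ?_⟩
  rw [EuclideanSpace.single_apply]
  split <;> simp

/-- for a finitely generated subgroup `G ⊆ ℝⁿ` with `Γ = G ∩ ℤⁿ`,
any finite `F ⊆ G` and `ε > 0`, the dual `Γ*` is contained in `F^{*,ε} + ℤⁿ`. -/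
theorem stmt7 {n : ℕ} (G : AddSubgroup (EuclideanSpace ℝ (Fin n))) (hfg : G.FG)
    (F : Set (EuclideanSpace ℝ (Fin n))) (hF : F.Finite) (hFG : F ⊆ G)
    (ε : ℝ) (hε : 0 < ε) :
    dualSet ((G : Set _) ∩ intPoints n) ⊆
      {z | ∃ y ∈ approxDual F ε, ∃ m ∈ intPoints n, z = y + m} := by
  classical
  intro x hx
  haveI : Fintype ↥hF.toFinset := FinsetCoe.fintype _
  set ι := {g // g ∈ hF.toFinset} with hι
  set S : AddSubgroup (EuclideanSpace ℝ ι) :=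
    { carrier := {v | ∃ m ∈ intPoints n, ∃ c : ι → ℤ,
        ∀ i : ι, v i = (inner ℝ m i.1 : ℝ) + (c i : ℝ)}
      zero_mem' := ⟨0, intPoints_zero n, 0, fun i => by simp⟩
      add_mem' := by
        rintro v w ⟨m1, hm1, c1, h1⟩ ⟨m2, hm2, c2, h2⟩
        refine ⟨m1 + m2, intPoints_add hm1 hm2, c1 + c2, fun i => ?_⟩
        simp only [PiLp.add_apply, h1 i, h2 i, inner_add_left, Pi.add_apply, Int.cast_add]
        ring
      neg_mem' := by
        rintro v ⟨m1, hm1, c1, h1⟩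
        refine ⟨-m1, intPoints_neg hm1, -c1, fun i => ?_⟩
        simp only [PiLp.neg_apply, h1 i, inner_neg_left, Pi.neg_apply, Int.cast_neg]
        ring } with hS
  set t : EuclideanSpace ℝ ι := WithLp.toLp 2 (fun i => (inner ℝ x i.1 : ℝ)) with htdef
  have hinner : ∀ a b : EuclideanSpace ℝ ι, (inner ℝ a b : ℝ) = ∑ i, a i * b i := by
    intro a b
    simp [PiLp.inner_apply, RCLike.inner_apply, mul_comm]
  have hyp : ∀ a : EuclideanSpace ℝ ι,
      (∀ s ∈ S, ∃ k : ℤ, ⟪a, s⟫ = (k : ℝ)) → ∃ k : ℤ, ⟪a, t⟫ = (k : ℝ) := by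
    intro a hint
    have hai : ∀ i : ι, ∃ k : ℤ, a i = (k : ℝ) := by
      intro i
      set v : EuclideanSpace ℝ ι := WithLp.toLp 2 (fun j => if j = i then (1 : ℝ) else 0) with hv
      have hvS : v ∈ S := by
        refine ⟨0, intPoints_zero n, fun j => if j = i then 1 else 0, fun j => ?_⟩
        simp only [hv]
        rw [inner_zero_left]
        split <;> simp
      obtain ⟨k, hk⟩ := hint v hvS
      refine ⟨k, ?_⟩
      rw [← hk, hinner]
      simp [hv, mul_ite]
      rw [Finset.sum_eq_single i (fun b _ hb => by simp [hb]) (by simp), if_pos rfl]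
    choose k hk using hai
    set γ : EuclideanSpace ℝ (Fin n) := ∑ i : ι, (k i : ℝ) • (i.1 : EuclideanSpace ℝ (Fin n))
      with hγ
    have hγG : γ ∈ G := by
      refine AddSubgroup.sum_mem _ (fun i _ => ?_)
      rw [Int.cast_smul_eq_zsmul ℝ]
      exact AddSubgroup.zsmul_mem _ (hFG (hF.mem_toFinset.1 i.2)) _
    have hγcoord : ∀ j : Fin n, γ j = ∑ i : ι, (k i : ℝ) * (i.1 : EuclideanSpace ℝ (Fin n)) j := by
      intro j
      have h1 : γ j = (inner ℝ (EuclideanSpace.single j (1:ℝ)) γ : ℝ) := by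
        rw [EuclideanSpace.inner_single_left]
        simp
      rw [h1, hγ, inner_sum]
      refine Finset.sum_congr rfl (fun i _ => ?_)
      rw [real_inner_smul_right, EuclideanSpace.inner_single_left]
      simp
    have hγint : γ ∈ intPoints n := by
      intro j
      set v : EuclideanSpace ℝ ι :=
        WithLp.toLp 2 (fun i => (inner ℝ (EuclideanSpace.single j (1:ℝ)) i.1 : ℝ)) with hv
      have hvS : v ∈ S := by
        refine ⟨EuclideanSpace.single j (1:ℝ), intPoints_single j, 0, fun i => ?_⟩
        simp [hv]
      obtain ⟨kj, hkj⟩ := hint v hvS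
      refine ⟨kj, ?_⟩
      rw [← hkj, hinner, hγcoord j]
      refine Finset.sum_congr rfl (fun i _ => ?_)
      rw [← hk i]
      simp only [hv]
      rw [EuclideanSpace.inner_single_left]
      simp
    obtain ⟨kk, hkk⟩ := hx γ ⟨hγG, hγint⟩
    have key : (inner ℝ a t : ℝ) = (inner ℝ x γ : ℝ) := by
      rw [hinner, hγ, inner_sum]
      refine Finset.sum_congr rfl (fun i _ => ?_)
      rw [real_inner_smul_right]
      show a i * (inner ℝ x i.1 : ℝ) = _
      rw [hk i]
    exact ⟨kk, by rw [key, hkk]⟩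
  have htcl := bidual_mem_closure S t hyp
  rw [Metric.mem_closure_iff] at htcl
  obtain ⟨s, hsS, hdist⟩ := htcl ε hε
  obtain ⟨m, hmint, c, hc⟩ := hsS
  refine ⟨x - m, ?_, m, hmint, by abel⟩
  intro g hg
  set i : ι := ⟨g, hF.mem_toFinset.2 hg⟩ with hi
  refine ⟨c i, ?_⟩
  have h1 : (inner ℝ (x - m) g : ℝ) - (c i : ℝ) = t i - s i := by
    rw [inner_sub_left, hc i, htdef]
    ring
  have h3 : t i - s i = (inner ℝ (EuclideanSpace.single i (1:ℝ)) (t - s) : ℝ) := by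
    rw [EuclideanSpace.inner_single_left]
    simp [PiLp.sub_apply]
  have h2 : |t i - s i| ≤ dist t s := by
    rw [h3]
    calc |(inner ℝ (EuclideanSpace.single i (1:ℝ)) (t - s) : ℝ)|
        ≤ ‖EuclideanSpace.single i (1:ℝ)‖ * ‖t - s‖ := abs_real_inner_le_norm _ _
      _ = dist t s := by
          rw [EuclideanSpace.norm_single, dist_eq_norm]
          simp
  rw [h1]
  exact h2.trans hdist.le
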